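/- Let A ∈ ℂ^{4×4} be Hermitian positive semidefinite satisfying, for some η > 0, A m · m̄ ≥ η·(χ⁴|(m₁,m₂)|² + χ²|(m₃,m₄)|²) for all m ∈ ℂ⁴ and a fixed χ with 0 < |χ| ≤ 1. Let C ∈ ℝ^{4×4} be diagonal positive definite with C ≥ c·I, c > 0. If m ∈ ℂ⁴ solves (χ^{-4}A + C)m = b with |b| ≤ M and additionally |⟨b, (0,0,m₃,m₄)⟩| ≤ M·|(m₃,m₄)|/|χ|, then |(m₁,m₂)| ≤ K·M and |(m₃,m₄)| ≤ K·|χ|·M for a constant K depending only on η and c. -/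

import Mathlib

open scoped ComplexConjugate

lemma aux_10 (η M x v : ℝ) (hη : 0 < η) (hx : 0 ≤ x) (hv : 0 ≤ v) (hM : 0 ≤ M)
    (h : η * x ^ 2 + η * v ^ 2 ≤ M * x + M * v) : x ≤ 2 / η * M := by
  rw [div_mul_eq_mul_div, le_div_iff₀ hη]
  rcases eq_or_lt_of_le (add_nonneg hx hv) with h0 | h0
  · have hx' : x = 0 := by linarith
    rw [hx']; nlinarith
  · have h1 : (η * (x + v)) * (x + v) ≤ (2 * M) * (x + v) := by
      nlinarith [mul_nonneg hη.le (sq_nonneg (x - v))]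
    have h2 : η * (x + v) ≤ 2 * M := le_of_mul_le_mul_right h1 h0
    nlinarith [mul_nonneg hη.le hv]

theorem stmt_10 (η c : ℝ) (hη : 0 < η) (hc : 0 < c) :
    ∃ K : ℝ, 0 < K ∧
      ∀ (χ : ℝ), χ ≠ 0 → |χ| ≤ 1 →
      ∀ (A C : EuclideanSpace ℂ (Fin 4) →L[ℂ] EuclideanSpace ℂ (Fin 4)),
        IsSelfAdjoint A →
        (∀ m, 0 ≤ (inner ℂ (A m) m : ℂ).re) →
        (∀ m : EuclideanSpace ℂ (Fin 4),
          η * (χ ^ 4 * (‖m 0‖ ^ 2 + ‖m 1‖ ^ 2) + χ ^ 2 * (‖m 2‖ ^ 2 + ‖m 3‖ ^ 2)) ≤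
            (inner ℂ (A m) m : ℂ).re) →
        (∃ d : Fin 4 → ℝ, (∀ i, c ≤ d i) ∧
          ∀ (m : EuclideanSpace ℂ (Fin 4)) (i : Fin 4), C m i = (d i : ℂ) * m i) →
        ∀ (m b : EuclideanSpace ℂ (Fin 4)) (M : ℝ),
          ((((χ : ℂ) ^ 4)⁻¹ • A + C) m = b →
          ‖b‖ ≤ M →
          ‖((inner ℂ b (WithLp.toLp 2 (fun i => if (i : ℕ) < 2 then 0 else m i) :
                EuclideanSpace ℂ (Fin 4)) : ℂ))‖ ≤
            M * Real.sqrt (‖m 2‖ ^ 2 + ‖m 3‖ ^ 2) / |χ| →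
          Real.sqrt (‖m 0‖ ^ 2 + ‖m 1‖ ^ 2) ≤ K * M ∧
          Real.sqrt (‖m 2‖ ^ 2 + ‖m 3‖ ^ 2) ≤ K * |χ| * M) := by
  refine ⟨2 / η, by positivity, ?_⟩
  intro χ hχ hχ1 A C hA hApos hcoerc hCd m b M heq hbM hbP
  obtain ⟨d, hd, hC⟩ := hCd
  set x := Real.sqrt (‖m 0‖ ^ 2 + ‖m 1‖ ^ 2) with hxdef
  set y := Real.sqrt (‖m 2‖ ^ 2 + ‖m 3‖ ^ 2) with hydef
  have hx0 : 0 ≤ x := Real.sqrt_nonneg _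
  have hy0 : 0 ≤ y := Real.sqrt_nonneg _
  have hx2 : x ^ 2 = ‖m 0‖ ^ 2 + ‖m 1‖ ^ 2 := Real.sq_sqrt (by positivity)
  have hy2 : y ^ 2 = ‖m 2‖ ^ 2 + ‖m 3‖ ^ 2 := Real.sq_sqrt (by positivity)
  have hM : 0 ≤ M := le_trans (norm_nonneg b) hbM
  have hw : 0 < |χ| := abs_pos.mpr hχ
  have hχ4 : (0:ℝ) < χ ^ 4 := by positivity
  set P : EuclideanSpace ℂ (Fin 4) := WithLp.toLp 2 (fun i => if (i : ℕ) < 2 then 0 else m i) with hPdef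
  set Q : EuclideanSpace ℂ (Fin 4) := WithLp.toLp 2 (fun i => if (i : ℕ) < 2 then m i else 0) with hQdef
  have hmQP : m = Q + P := by
    ext i
    by_cases h : (i : ℕ) ≤ 1 <;> simp [hPdef, hQdef, h]
  have hQnorm : ‖Q‖ = x := by
    rw [EuclideanSpace.norm_eq]
    congr 1
    rw [Fin.sum_univ_four]
    norm_num [hQdef, show ((0:Fin 4):ℕ) < 2 from by decide, show ((1:Fin 4):ℕ) < 2 from by decide,
      show ¬((2:Fin 4):ℕ) < 2 from by decide, show ¬((3:Fin 4):ℕ) < 2 from by decide]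
  -- upper bound on Re ⟨b, m⟩
  have hb : b = ((χ:ℂ)^4)⁻¹ • A m + C m := by
    rw [← heq]; rfl
  have hupper : (inner ℂ b m : ℂ).re ≤ M * x + M * (y / |χ|) := by
    have h1 : (inner ℂ b m : ℂ) = inner ℂ b Q + inner ℂ b P := by
      rw [hmQP, inner_add_right]
    have h2 : (inner ℂ b Q : ℂ).re ≤ M * x := by
      calc (inner ℂ b Q : ℂ).re ≤ ‖(inner ℂ b Q : ℂ)‖ := Complex.re_le_norm _
        _ ≤ ‖b‖ * ‖Q‖ := by exact norm_inner_le_norm b Q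
        _ ≤ M * x := by rw [hQnorm]; exact mul_le_mul_of_nonneg_right hbM hx0
    have h3 : (inner ℂ b P : ℂ).re ≤ M * (y / |χ|) := by
      calc (inner ℂ b P : ℂ).re ≤ ‖(inner ℂ b P : ℂ)‖ := Complex.re_le_norm _
        _ ≤ M * y / |χ| := hbP
        _ = M * (y / |χ|) := by ring
    rw [h1, Complex.add_re]
    exact add_le_add h2 h3
  -- lower bound on Re ⟨b, m⟩
  have hre : (inner ℂ b m : ℂ).re =
      (χ ^ 4)⁻¹ * (inner ℂ (A m) m : ℂ).re + (inner ℂ (C m) m : ℂ).re := by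
    rw [hb, inner_add_left, inner_smul_left, Complex.add_re]
    congr 1
    have : (starRingEnd ℂ) (((χ:ℂ) ^ 4)⁻¹) = (((χ ^ 4)⁻¹ : ℝ) : ℂ) := by
      push_cast
      simp [Complex.conj_ofReal]
    rw [this, Complex.re_ofReal_mul]
  have hCnn : 0 ≤ (inner ℂ (C m) m : ℂ).re := by
    rw [PiLp.inner_apply]
    simp only [RCLike.inner_apply]
    rw [Complex.re_sum]
    apply Finset.sum_nonneg
    intro i _
    rw [hC m i, map_mul, Complex.conj_ofReal, mul_left_comm, Complex.mul_conj']
    rw [← Complex.ofReal_pow, ← Complex.ofReal_mul, Complex.ofReal_re]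
    have := (hc.trans_le (hd i)).le
    positivity
  have hAlow : η * x ^ 2 + η * (y / |χ|) ^ 2 ≤ (χ ^ 4)⁻¹ * (inner ℂ (A m) m : ℂ).re := by
    have h1 := hcoerc m
    rw [← hx2, ← hy2] at h1
    have h2 : (χ ^ 4)⁻¹ * (η * (χ ^ 4 * x ^ 2 + χ ^ 2 * y ^ 2)) ≤
        (χ ^ 4)⁻¹ * (inner ℂ (A m) m : ℂ).re :=
      mul_le_mul_of_nonneg_left h1 (by positivity)
    refine le_trans (le_of_eq ?_) h2
    have hsq : |χ| ^ 2 = χ ^ 2 := sq_abs χ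
    field_simp
    rw [hsq]
    ring
  have hkey : η * x ^ 2 + η * (y / |χ|) ^ 2 ≤ M * x + M * (y / |χ|) := by
    have := hAlow.trans (by linarith [hre, hCnn] : (χ ^ 4)⁻¹ * (inner ℂ (A m) m : ℂ).re ≤ (inner ℂ b m : ℂ).re)
    linarith [hupper]
  have hv0 : 0 ≤ y / |χ| := by positivity
  constructor
  · exact aux_10 η M x (y / |χ|) hη hx0 hv0 hM hkey
  · have h := aux_10 η M (y / |χ|) x hη hv0 hx0 hM (by linarith)
    rw [div_le_iff₀ hw] at h
    calc y ≤ 2 / η * M * |χ| := h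
      _ = 2 / η * |χ| * M := by ring
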